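/- If g ⊂ so(V) is a Lie subalgebra containing so(V₀) with g = so(V₀) ⊕ (V₀ ⊗ R₁) for a 1-dimensional subspace R₁ ⊂ V₁, then g preserves the orthogonal complement S of R₁ in V₁, and the induced homomorphism g → so(V₀ ⊕ S) is a Lie algebra isomorphism. -/

import Mathlib

open Module

attribute [local instance 100] LieRing.ofAssociativeRing

/-- `f` is skew-adjoint with respect to `B`. -/
def IsSkew {V : Type*} [AddCommGroup V] [Module ℝ V]
    (B : LinearMap.BilinForm ℝ V) (f : Module.End ℝ V) : Prop :=
  ∀ x y : V, B (f x) y = - B x (f y)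

/-- The copy of `so(W^⊥)` inside `so(V)`: skew endomorphisms vanishing on `W`. -/
def soTriv {V : Type*} [AddCommGroup V] [Module ℝ V]
    (B : LinearMap.BilinForm ℝ V) (W : Submodule ℝ V) : Set (Module.End ℝ V) :=
  {f | IsSkew B f ∧ ∀ x ∈ W, f x = 0}

/-- The skew endomorphism `x ↦ B(v₀,x) v₁ - B(v₁,x) v₀` attached to `v₀ ⊗ v₁`. -/
noncomputable def tensorSkew {V : Type*} [AddCommGroup V] [Module ℝ V]
    (B : LinearMap.BilinForm ℝ V) (v₀ v₁ : V) : Module.End ℝ V :=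
  (LinearMap.toSpanSingleton ℝ V v₁).comp (B v₀) - (LinearMap.toSpanSingleton ℝ V v₀).comp (B v₁)

/-- The Lie subalgebra `so(W^⊥) ⊂ so(V)` of skew endomorphisms vanishing on `W`. -/
def soLie {V : Type*} [AddCommGroup V] [Module ℝ V]
    (B : LinearMap.BilinForm ℝ V) (W : Submodule ℝ V) :
    LieSubalgebra ℝ (Module.End ℝ V) where
  carrier := soTriv B W
  add_mem' := by
    rintro a b ⟨ha1, ha2⟩ ⟨hb1, hb2⟩
    refine ⟨fun x y => ?_, fun x hx => ?_⟩
    · simp [LinearMap.add_apply, map_add, ha1 x y, hb1 x y]; ring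
    · simp [LinearMap.add_apply, ha2 x hx, hb2 x hx]
  zero_mem' := by
    refine ⟨fun x y => ?_, fun x hx => ?_⟩ <;> simp [IsSkew]
  smul_mem' := by
    rintro c a ⟨ha1, ha2⟩
    refine ⟨fun x y => ?_, fun x hx => ?_⟩
    · simp [LinearMap.smul_apply, map_smul, ha1 x y]
    · simp [LinearMap.smul_apply, ha2 x hx]
  lie_mem' := by
    rintro a b ⟨ha1, ha2⟩ ⟨hb1, hb2⟩
    refine ⟨fun x y => ?_, fun x hx => ?_⟩
    · have h1 := ha1 (b x) y
      have h2 := hb1 (a x) y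
      have h3 := hb1 x (a y)
      have h4 := ha1 x (b y)
      simp only [Ring.lie_def, LinearMap.sub_apply, Module.End.mul_apply, map_sub]
      rw [h1, h2, hb1, ha1]
      ring
    · simp [Ring.lie_def, LinearMap.sub_apply, Module.End.mul_apply,
        ha2 x hx, hb2 x hx]

section Aux
variable {V : Type*} [AddCommGroup V] [Module ℝ V]

lemma tensorSkew_apply (B : LinearMap.BilinForm ℝ V) (v w x : V) :
    tensorSkew B v w x = B v x • w - B w x • v := by
  simp [tensorSkew, LinearMap.toSpanSingleton_apply]

lemma isSkew_tensorSkew (B : LinearMap.BilinForm ℝ V) (hsymm : B.IsSymm) (v w : V) :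
    IsSkew B (tensorSkew B v w) := by
  intro x y
  have h1 : B x w = B w x := (hsymm.eq w x).symm
  have h2 : B x v = B v x := (hsymm.eq v x).symm
  simp only [tensorSkew_apply, map_sub, map_smul, LinearMap.sub_apply, LinearMap.smul_apply,
    smul_eq_mul, h1, h2]
  ring

lemma tensorSkew_smul_left (B : LinearMap.BilinForm ℝ V) (t : ℝ) (v w : V) :
    tensorSkew B (t • v) w = t • tensorSkew B v w := by
  ext x
  simp only [tensorSkew_apply, map_smul, LinearMap.smul_apply, smul_eq_mul, smul_sub,
    smul_smul]
  module

def skewSub (B : LinearMap.BilinForm ℝ V) : Submodule ℝ (Module.End ℝ V) where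
  carrier := {f | IsSkew B f}
  add_mem' := fun hf hg x y => by
    simp only [LinearMap.add_apply, map_add, hf x y, hg x y]; ring
  zero_mem' := fun x y => by simp
  smul_mem' := fun c f hf x y => by
    simp only [LinearMap.smul_apply, map_smul, hf x y, smul_eq_mul]; ring

def vanishSub (S : Submodule ℝ V) : Submodule ℝ (Module.End ℝ V) where
  carrier := {f | ∀ x ∈ S, f x = 0}
  add_mem' := fun hf hg x hx => by simp [LinearMap.add_apply, hf x hx, hg x hx]
  zero_mem' := fun x hx => rfl
  smul_mem' := fun c f hf x hx => by simp [LinearMap.smul_apply, hf x hx]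

end Aux

/-- if `𝔤 ⊂ so(V)` is a Lie subalgebra containing `so(V₀)` with
`𝔤 = so(V₀) ⊕ (V₀ ⊗ R₁)` for a line `R₁ ⊂ V₁`, then `𝔤` preserves the orthogonal
complement `S` of `R₁` in `V₁`, and `𝔤` is isomorphic, as a Lie algebra, to
`so(V₀ ⊕ S)` (the subalgebra of `so(V)` acting trivially on `R₁`). -/
theorem soV0_plus_line_tensor_isomorphic_to_soV2
    {V : Type*} [AddCommGroup V] [Module ℝ V] [FiniteDimensional ℝ V]
    (B : LinearMap.BilinForm ℝ V) (hsymm : B.IsSymm) (hnd : B.Nondegenerate)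
    (V₁ : Submodule ℝ V) (hdim : Module.finrank ℝ V₁ = 2)
    (hpos : ∀ w ∈ V₁, w ≠ 0 → 0 < B w w)
    (V₀ : Submodule ℝ V) (hV₀ : V₀ = B.orthogonal V₁)
    (R₁ : Submodule ℝ V) (hR₁V₁ : R₁ ≤ V₁) (hR₁ : Module.finrank ℝ R₁ = 1)
    (S : Submodule ℝ V) (hS : S = B.orthogonal R₁ ⊓ V₁)
    (g : LieSubalgebra ℝ (Module.End ℝ V))
    -- `𝔤 = so(V₀) ⊕ (V₀ ⊗ R₁)` :
    (hg : g.toSubmodule = Submodule.span ℝ (soTriv B V₁) ⊔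
      Submodule.span ℝ {f | ∃ v₀ ∈ V₀, ∃ r ∈ R₁, f = tensorSkew B v₀ r}) :
    (∀ f ∈ g, ∀ s ∈ S, f s ∈ S) ∧
    Nonempty (g ≃ₗ⁅ℝ⁆ soLie B R₁) := by
  have hsym : ∀ x y : V, B x y = B y x := fun x y => (hsymm.eq x y)
  have hV₀mem : ∀ v₀ ∈ V₀, ∀ n ∈ V₁, B n v₀ = 0 := by
    intro v₀ hv₀ n hn; rw [hV₀] at hv₀; exact hv₀ n hn
  have hSmem : ∀ x ∈ S, ∀ n ∈ R₁, B n x = 0 := by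
    intro x hx; rw [hS] at hx; exact fun n hn => hx.1 n hn
  have hSV₁ : S ≤ V₁ := by rw [hS]; exact inf_le_right
  -- get r
  have hR₁ne : R₁ ≠ ⊥ := by intro h; rw [h] at hR₁; simp at hR₁
  obtain ⟨r, hrR₁, hrne⟩ := Submodule.exists_mem_ne_zero_of_ne_bot hR₁ne
  have hrV₁ : r ∈ V₁ := hR₁V₁ hrR₁
  have ha : 0 < B r r := hpos r hrV₁ hrne
  have hR₁eq : R₁ = Submodule.span ℝ {r} := by
    symm
    apply Submodule.eq_of_le_of_finrank_eq
    · exact (Submodule.span_singleton_le_iff_mem r R₁).2 hrR₁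
    · rw [hR₁, finrank_span_singleton hrne]
  -- get w
  have hnle : ¬ (V₁ ≤ Submodule.span ℝ {r}) := by
    intro hle
    have := Submodule.finrank_mono hle
    rw [hdim, finrank_span_singleton hrne] at this
    omega
  obtain ⟨w, hwV₁, hwns⟩ := SetLike.not_le_iff_exists.1 hnle
  -- build s
  set s : V := B r r • w - B r w • r with hs_def
  have hsV₁ : s ∈ V₁ := sub_mem (V₁.smul_mem _ hwV₁) (V₁.smul_mem _ hrV₁)
  have hrs : B r s = 0 := by
    simp only [hs_def, map_sub, map_smul, smul_eq_mul]; ring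
  have hsr : B s r = 0 := by rw [hsym]; exact hrs
  have hsne : s ≠ 0 := by
    intro h
    apply hwns
    have h2 : B r r • w = B r w • r := sub_eq_zero.1 h
    have hw : w = ((B r r)⁻¹ * B r w) • r := by
      rw [mul_smul, ← h2, smul_smul, inv_mul_cancel₀ ha.ne', one_smul]
    rw [hw]
    exact Submodule.smul_mem _ _ (Submodule.mem_span_singleton_self r)
  have hb : 0 < B s s := hpos s hsV₁ hsne
  have hsS : s ∈ S := by
    rw [hS]
    refine ⟨?_, hsV₁⟩
    intro n hn
    rw [hR₁eq] at hn
    obtain ⟨t, rfl⟩ := Submodule.mem_span_singleton.1 hn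
    show B (t • r) s = 0
    rw [map_smul]; simp [hrs]
  -- V₁ = span {r, s}
  have hli : LinearIndependent ℝ ![r, s] := by
    rw [LinearIndependent.pair_iff]
    intro α β hαβ
    have h1 : B r (α • r + β • s) = 0 := by rw [hαβ]; simp
    rw [map_add, map_smul, map_smul, hrs] at h1
    simp only [smul_eq_mul, mul_zero, add_zero] at h1
    have hα : α = 0 := by
      rcases mul_eq_zero.1 h1 with h | h
      · exact h
      · exact absurd h ha.ne'
    refine ⟨hα, ?_⟩
    rw [hα, zero_smul, zero_add] at hαβ
    exact (smul_eq_zero.1 hαβ).resolve_right hsne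
  have hV₁eq : V₁ = Submodule.span ℝ {r, s} := by
    symm
    apply Submodule.eq_of_le_of_finrank_eq
    · rw [Submodule.span_le]
      rintro x (rfl | rfl)
      · exact hrV₁
      · exact hsV₁
    · rw [hdim]
      have hrange : Set.range ![r, s] = {r, s} := Matrix.range_cons_cons_empty r s _
      rw [← hrange, finrank_span_eq_card hli]
      simp
  have hmemV₁ : ∀ n ∈ V₁, ∃ α β : ℝ, n = α • r + β • s := by
    intro n hn
    rw [hV₁eq] at hn
    obtain ⟨α, β, h⟩ := Submodule.mem_span_pair.1 hn
    exact ⟨α, β, h.symm⟩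
  -- normalize s
  set c : ℝ := Real.sqrt (B r r / B s s) with hc_def
  have hc : 0 < c := Real.sqrt_pos.2 (div_pos ha hb)
  have hc2 : c * c * B s s = B r r := by
    rw [hc_def, Real.mul_self_sqrt (div_pos ha hb).le]
    field_simp
  set s₀ : V := c • s with hs₀_def
  have hs₀S : s₀ ∈ S := S.smul_mem _ hsS
  have hs₀V₁ : s₀ ∈ V₁ := hSV₁ hs₀S
  have hrs₀ : B r s₀ = 0 := by rw [hs₀_def, map_smul, hrs, smul_zero]
  have hs₀r : B s₀ r = 0 := by rw [hsym]; exact hrs₀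
  have hs₀s₀ : B s₀ s₀ = B r r := by
    simp only [hs₀_def, map_smul, LinearMap.smul_apply, smul_eq_mul]
    rw [← hc2]; ring
  have hs₀s : B s₀ s = c * B s s := by
    rw [hs₀_def, map_smul, LinearMap.smul_apply, smul_eq_mul]
  -- the reflection u, T
  set u : V := r - s₀ with hu_def
  have huV₁ : u ∈ V₁ := sub_mem hrV₁ hs₀V₁
  have hur : B u r = B r r := by
    rw [hu_def, map_sub, LinearMap.sub_apply, hs₀r, sub_zero]
  have hus₀ : B u s₀ = -(B r r) := by
    rw [hu_def, map_sub, LinearMap.sub_apply, hrs₀, hs₀s₀, zero_sub]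
  have huu : B u u = 2 * B r r := by
    rw [hu_def, map_sub (B u), hur, hus₀]
    ring
  have huV₀ : ∀ v₀ ∈ V₀, B u v₀ = 0 := fun v₀ h => hV₀mem v₀ h u huV₁
  set T : Module.End ℝ V :=
    LinearMap.id - (B r r)⁻¹ • ((LinearMap.toSpanSingleton ℝ V u).comp (B u)) with hT_def
  have hT_apply : ∀ x, T x = x - ((B r r)⁻¹ * B u x) • u := by
    intro x
    simp [hT_def, LinearMap.toSpanSingleton_apply, smul_smul]
  have hTr : T r = s₀ := by
    rw [hT_apply, hur, inv_mul_cancel₀ ha.ne', one_smul, hu_def]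
    abel
  have hTs₀ : T s₀ = r := by
    rw [hT_apply, hus₀, mul_neg, inv_mul_cancel₀ ha.ne', hu_def]
    module
  have hTv₀ : ∀ v₀ ∈ V₀, T v₀ = v₀ := by
    intro v₀ h
    rw [hT_apply, huV₀ v₀ h]
    simp
  have hT_adj : ∀ x y, B (T x) y = B x (T y) := by
    intro x y
    rw [hT_apply, hT_apply]
    simp only [map_sub, map_smul, LinearMap.sub_apply, LinearMap.smul_apply, smul_eq_mul]
    rw [hsym x u]
    ring
  have hTT : ∀ x, T (T x) = x := by
    intro x
    rw [hT_apply, hT_apply x, map_sub (B u), map_smul, huu, smul_eq_mul]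
    have h5 : (B r r)⁻¹ * (B u x - (B r r)⁻¹ * B u x * (2 * B r r)) =
        -((B r r)⁻¹ * B u x) := by
      field_simp
      ring
    rw [h5]
    module
  have hTV₁ : ∀ x ∈ V₁, T x ∈ V₁ := by
    intro x hx
    rw [hT_apply]
    exact sub_mem hx (V₁.smul_mem _ huV₁)
  have hTR₁S : ∀ x ∈ R₁, T x ∈ S := by
    intro x hx
    rw [hR₁eq] at hx
    obtain ⟨t, rfl⟩ := Submodule.mem_span_singleton.1 hx
    rw [map_smul, hTr]
    exact S.smul_mem _ hs₀S
  -- g consists of skew maps vanishing on S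
  have hg_le_skew : g.toSubmodule ≤ skewSub B := by
    rw [hg]
    refine sup_le (Submodule.span_le.2 ?_) (Submodule.span_le.2 ?_)
    · exact fun f hf => hf.1
    · rintro f ⟨v₀, hv₀, r', hr', rfl⟩
      exact isSkew_tensorSkew B hsymm v₀ r'
  have hg_le_van : g.toSubmodule ≤ vanishSub S := by
    rw [hg]
    refine sup_le (Submodule.span_le.2 ?_) (Submodule.span_le.2 ?_)
    · exact fun f hf x hx => hf.2 x (hSV₁ hx)
    · rintro f ⟨v₀, hv₀, r', hr', rfl⟩ x hx
      rw [tensorSkew_apply]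
      have h1 : B v₀ x = 0 := by rw [hsym]; exact hV₀mem v₀ hv₀ x (hSV₁ hx)
      have h2 : B r' x = 0 := hSmem x hx r' hr'
      rw [h1, h2]
      simp
  have hgskew : ∀ f ∈ g, IsSkew B f := fun f hf =>
    hg_le_skew ((LieSubalgebra.mem_toSubmodule (L' := g)).2 hf)
  have hgvan : ∀ f ∈ g, ∀ x ∈ S, f x = 0 := fun f hf =>
    hg_le_van ((LieSubalgebra.mem_toSubmodule (L' := g)).2 hf)
  -- the conjugation map
  set φ : Module.End ℝ V → Module.End ℝ V := fun f => T * f * T with hφ_def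
  have hφ_apply : ∀ f x, φ f x = T (f (T x)) := fun f x => rfl
  have hφφ : ∀ f, φ (φ f) = f := by
    intro f
    ext x
    simp [hφ_def, Module.End.mul_apply, hTT]
  have hφmul : ∀ f₁ f₂, φ f₁ * φ f₂ = φ (f₁ * f₂) := by
    intro f₁ f₂
    ext x
    simp [hφ_def, Module.End.mul_apply, hTT]
  have hφskew : ∀ f, IsSkew B f → IsSkew B (φ f) := by
    intro f hf x y
    rw [hφ_apply]
    calc B (T (f (T x))) y = B (f (T x)) (T y) := hT_adj _ _
      _ = - B (T x) (f (T y)) := hf _ _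
      _ = - B x (T (f (T y))) := by rw [hT_adj]
  have hφtensor : ∀ v w', φ (tensorSkew B v w') = tensorSkew B (T v) (T w') := by
    intro v w'
    ext x
    rw [hφ_apply, tensorSkew_apply, tensorSkew_apply]
    calc T (B v (T x) • w' - B w' (T x) • v)
        = B v (T x) • T w' - B w' (T x) • T v := by rw [map_sub, map_smul, map_smul]
      _ = B (T v) x • T w' - B (T w') x • T v := by rw [← hT_adj v x, ← hT_adj w' x]
  -- forward inclusion
  have hfwd : ∀ f ∈ g, φ f ∈ soLie B R₁ := by
    intro f hf
    refine ⟨hφskew f (hgskew f hf), ?_⟩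
    intro x hx
    rw [hφ_apply, hgvan f hf (T x) (hTR₁S x hx), map_zero]
  -- backward inclusion
  have hbwd : ∀ f, IsSkew B f → (∀ x ∈ R₁, f x = 0) → φ f ∈ g := by
    intro f hfskew hfR
    set w₀ : V := f s₀ with hw₀_def
    have hfr : f r = 0 := hfR r hrR₁
    have hw₀r : B w₀ r = 0 := by
      rw [hw₀_def, hfskew, hfr, map_zero, neg_zero]
    have hw₀s₀ : B w₀ s₀ = 0 := by
      have h1 : B w₀ s₀ = - B s₀ w₀ := hfskew s₀ s₀
      rw [hsym s₀ w₀] at h1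
      linear_combination h1 / 2
    have hw₀s : B w₀ s = 0 := by
      have h1 : B w₀ s₀ = c * B w₀ s := by
        rw [hs₀_def, map_smul, smul_eq_mul]
      rw [hw₀s₀] at h1
      exact (mul_eq_zero.1 h1.symm).resolve_left hc.ne'
    have hw₀V₀ : w₀ ∈ V₀ := by
      rw [hV₀]
      intro n hn
      obtain ⟨α, β, hn'⟩ := hmemV₁ n hn
      show B n w₀ = 0
      rw [hn']
      simp only [map_add, map_smul, LinearMap.add_apply, LinearMap.smul_apply, smul_eq_mul]
      rw [hsym r w₀, hw₀r, hsym s w₀, hw₀s]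
      ring
    have hfs : f s = c⁻¹ • w₀ := by
      have h1 : c⁻¹ • s₀ = s := by
        rw [hs₀_def, smul_smul, inv_mul_cancel₀ hc.ne', one_smul]
      rw [← h1, map_smul, hw₀_def]
    set h : Module.End ℝ V := f + (B r r)⁻¹ • tensorSkew B w₀ s₀ with hh_def
    have hhr : h r = 0 := by
      rw [hh_def]
      simp only [LinearMap.add_apply, LinearMap.smul_apply, tensorSkew_apply, hfr, hw₀r, hs₀r,
        zero_smul, sub_zero, smul_zero, zero_add, sub_self]
    have hhs : h s = 0 := by
      rw [hh_def]
      simp only [LinearMap.add_apply, LinearMap.smul_apply, tensorSkew_apply, hfs, hw₀s, hs₀s,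
        zero_smul, zero_sub, smul_neg]
      have h1 : (B r r)⁻¹ • ((c * B s s) • w₀) = c⁻¹ • w₀ := by
        rw [smul_smul]
        congr 1
        rw [← hc2]
        field_simp
      rw [h1]
      module
    have hhV₁ : ∀ x ∈ V₁, h x = 0 := by
      intro x hx
      obtain ⟨α, β, hx'⟩ := hmemV₁ x hx
      rw [hx', map_add, map_smul, map_smul, hhr, hhs]
      simp
    have hhskew : IsSkew B h :=
      (skewSub B).add_mem hfskew
        ((skewSub B).smul_mem _ (isSkew_tensorSkew B hsymm w₀ s₀))
    have hφh : φ h ∈ soTriv B V₁ := by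
      refine ⟨hφskew h hhskew, ?_⟩
      intro x hx
      rw [hφ_apply, hhV₁ (T x) (hTV₁ x hx), map_zero]
    have hfe : φ f = φ h + tensorSkew B (-(B r r)⁻¹ • w₀) r := by
      have hfh : f = h - (B r r)⁻¹ • tensorSkew B w₀ s₀ := by
        rw [hh_def]; abel
      rw [hfh, hφ_def]
      simp only [mul_sub, sub_mul, mul_smul_comm, smul_mul_assoc]
      have h2 : T * tensorSkew B w₀ s₀ * T = tensorSkew B w₀ r := by
        have := hφtensor w₀ s₀
        rw [hφ_def] at this
        simp only at this
        rw [this, hTv₀ w₀ hw₀V₀, hTs₀]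
      rw [h2, tensorSkew_smul_left]
      module
    show φ f ∈ g
    rw [← LieSubalgebra.mem_toSubmodule, hg, hfe]
    refine Submodule.add_mem _ (Submodule.mem_sup_left (Submodule.subset_span hφh))
      (Submodule.mem_sup_right (Submodule.subset_span ?_))
    exact ⟨-(B r r)⁻¹ • w₀, V₀.smul_mem _ hw₀V₀, r, hrR₁, rfl⟩
  -- conclusion
  refine ⟨fun f hf x hx => by rw [hgvan f hf x hx]; exact S.zero_mem, ⟨?_⟩⟩
  refine
    { toFun := fun f => ⟨φ f.1, hfwd f.1 f.2⟩
      map_add' := fun f₁ f₂ => Subtype.ext ?_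
      map_smul' := fun t f => Subtype.ext ?_
      map_lie' := @fun f₁ f₂ => Subtype.ext ?_
      invFun := fun f => ⟨φ f.1, hbwd f.1 f.2.1 f.2.2⟩
      left_inv := fun f => Subtype.ext (hφφ f.1)
      right_inv := fun f => Subtype.ext (hφφ f.1) }
  · show φ (f₁.1 + f₂.1) = φ f₁.1 + φ f₂.1
    simp [hφ_def, mul_add, add_mul]
  · show φ (t • f.1) = t • φ f.1
    simp [hφ_def, mul_smul_comm, smul_mul_assoc]
  · show φ ⁅f₁.1, f₂.1⁆ = ⁅φ f₁.1, φ f₂.1⁆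
    have hφsub : ∀ A C : Module.End ℝ V, φ (A - C) = φ A - φ C := by
      intro A C
      simp [hφ_def, mul_sub, sub_mul]
    rw [Ring.lie_def, Ring.lie_def, hφsub, hφmul, hφmul]
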